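/- For every constant k > 0 there are constants c', C > 0 such that the following holds for all n. Suppose the n processing times are drawn independently and uniformly at random from {1,…,n} and thereafter remain fixed (a one-time change), and the initial solution is drawn uniformly at random from {0,1}^n. Then with probability at least 1 − n^{−k} (over the processing times, the initial solution, and the run of the algorithm) the (1+1) EA obtains a solution of discrepancy at most c' · log n within C · n^{3.5} · log² n iterations. -/

import Mathlib

open scoped BigOperators ENNReal

namespace MakespanDyn

/-- Load of machine `b` (machine `M₁` corresponds to `b = false`, `M₂` to `b = true`). -/
def load {n : ℕ} (p : Fin n → ℝ) (x : Fin n → Bool) (b : Bool) : ℝ :=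
  ∑ i, if x i = b then p i else 0

/-- The makespan of the solution `x` under processing times `p`. -/
def mspan {n : ℕ} (p : Fin n → ℝ) (x : Fin n → Bool) : ℝ :=
  max (load p x false) (load p x true)

/-- The discrepancy of the solution `x` under processing times `p`. -/
def disc {n : ℕ} (p : Fin n → ℝ) (x : Fin n → Bool) : ℝ :=
  |load p x false - load p x true|

/-- Flip bit `i` of `x`. -/
def flip {n : ℕ} (x : Fin n → Bool) (i : Fin n) : Fin n → Bool :=
  Function.update x i (!(x i))

/-- One iteration of RLS with processing times `p`: flip one uniformly random bit
and accept iff the makespan does not increase. -/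
noncomputable def rlsStep {n : ℕ} (hn : 0 < n) (p : Fin n → ℝ) (x : Fin n → Bool) :
    PMF (Fin n → Bool) :=
  haveI : Nonempty (Fin n) := Fin.pos_iff_nonempty.mp hn
  (PMF.uniformOfFintype (Fin n)).map fun i =>
    if mspan p (flip x i) ≤ mspan p x then flip x i else x

/-- The distribution of the mutation mask of the (1+1) EA: every bit is set
independently with probability `1/n`. -/
noncomputable def maskPMF (n : ℕ) (hn : 0 < n) : PMF (Fin n → Bool) :=
  ⟨fun m => ∏ i, (if m i then (n : ℝ≥0∞)⁻¹ else 1 - (n : ℝ≥0∞)⁻¹), by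
    classical
    have hinv : (n : ℝ≥0∞)⁻¹ ≤ 1 := ENNReal.inv_le_one.mpr (by exact_mod_cast hn)
    have hsum :
        ∑ m : Fin n → Bool, ∏ i, (if m i then (n : ℝ≥0∞)⁻¹ else 1 - (n : ℝ≥0∞)⁻¹) = 1 := by
      rw [← Fintype.piFinset_univ, ← Finset.prod_univ_sum
        (fun _ : Fin n => (Finset.univ : Finset Bool))
        (fun _ b => if b then (n : ℝ≥0∞)⁻¹ else 1 - (n : ℝ≥0∞)⁻¹)]
      have key : (n : ℝ≥0∞)⁻¹ + (1 - (n : ℝ≥0∞)⁻¹) = 1 := add_tsub_cancel_of_le hinv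
      simp [key]
    have := hasSum_fintype
      (fun m : Fin n → Bool => ∏ i, (if m i then (n : ℝ≥0∞)⁻¹ else 1 - (n : ℝ≥0∞)⁻¹))
    rwa [hsum] at this⟩

/-- One iteration of the (1+1) EA with processing times `p`: flip every bit
independently with probability `1/n` and accept iff the makespan does not increase. -/
noncomputable def eaStep {n : ℕ} (hn : 0 < n) (p : Fin n → ℝ) (x : Fin n → Bool) :
    PMF (Fin n → Bool) :=
  (maskPMF n hn).map fun m =>
    let y : Fin n → Bool := fun i => xor (m i) (x i)
    if mspan p y ≤ mspan p x then y else x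

/-- A configuration: a solution together with the current processing times. -/
abbrev Cfg (n : ℕ) := (Fin n → Bool) × (Fin n → ℝ)

/-- The run of an algorithm given by `step` with an adversary `adv`, which may
change the processing times (as an arbitrary function of the history) before each
iteration.  `run step adv init t` is the distribution of the history (most recent
configuration first) after `t` iterations. -/
noncomputable def run {n : ℕ} (step : (Fin n → ℝ) → (Fin n → Bool) → PMF (Fin n → Bool))
    (adv : List (Cfg n) → (Fin n → ℝ)) (init : Cfg n) : ℕ → PMF (List (Cfg n))
  | 0 => PMF.pure [init]
  | t + 1 =>
      (run step adv init t).bind fun h =>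
        (step (adv h) h.headI.1).map fun x' => (x', adv h) :: h

/-- The expected number of iterations until a configuration satisfying `good` occurs,
computed as `∑_{t ≥ 0} Pr(T > t)` where `T > t` iff no configuration in the history
after `t` iterations is good. -/
noncomputable def expectedHittingTime {σ : Type*} (runs : ℕ → PMF (List σ))
    (good : σ → Prop) : ℝ≥0∞ :=
  ∑' t, (runs t).toOuterMeasure {h | ∀ c ∈ h, ¬ good c}



/-! ### Auxiliary development -/

section Aux

open Finset

variable {n : ℕ}

/-- Signed contribution of job `i`. -/
def tz (pv : Fin n → ℕ) (x : Fin n → Bool) (i : Fin n) : ℤ :=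
  if x i = false then (pv i : ℤ) else -(pv i : ℤ)

/-- Signed discrepancy (integer valued). -/
def dz (pv : Fin n → ℕ) (x : Fin n → Bool) : ℤ := ∑ i, tz pv x i

/-- Natural-number discrepancy. -/
def Dn (pv : Fin n → ℕ) (x : Fin n → Bool) : ℕ := (dz pv x).natAbs

lemma load_sub (pv : Fin n → ℕ) (x : Fin n → Bool) :
    load (fun i => (pv i : ℝ)) x false - load (fun i => (pv i : ℝ)) x true
      = ((dz pv x : ℤ) : ℝ) := by
  simp only [load, dz, tz, ← Finset.sum_sub_distrib]
  push_cast
  refine Finset.sum_congr rfl fun i _ => ?_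
  cases h : x i <;> simp [h]

lemma disc_eq_Dn (pv : Fin n → ℕ) (x : Fin n → Bool) :
    disc (fun i => (pv i : ℝ)) x = (Dn pv x : ℝ) := by
  rw [disc, load_sub, Dn]
  rw [Nat.cast_natAbs]
  push_cast
  rfl

lemma load_add (p : Fin n → ℝ) (x : Fin n → Bool) :
    load p x false + load p x true = ∑ i, p i := by
  simp only [load, ← Finset.sum_add_distrib]
  refine Finset.sum_congr rfl fun i _ => ?_
  cases h : x i <;> simp [h]

lemma two_mul_mspan (p : Fin n → ℝ) (x : Fin n → Bool) :
    2 * mspan p x = (∑ i, p i) + disc p x := by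
  rw [← load_add p x, mspan, disc]
  rcases le_total (load p x false) (load p x true) with h | h
  · rw [max_eq_right h, abs_of_nonpos (by linarith)]; ring
  · rw [max_eq_left h, abs_of_nonneg (by linarith)]; ring

lemma mspan_le_iff (p : Fin n → ℝ) (x y : Fin n → Bool) :
    mspan p y ≤ mspan p x ↔ disc p y ≤ disc p x := by
  have hx := two_mul_mspan p x
  have hy := two_mul_mspan p y
  constructor <;> intro h <;> nlinarith

lemma Dn_le_sum (pv : Fin n → ℕ) (x : Fin n → Bool) :
    Dn pv x ≤ ∑ i, pv i := by
  have h := nat_abs_sum_le Finset.univ (tz pv x)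
  rw [Dn, dz]
  refine h.trans (le_of_eq (Finset.sum_congr rfl fun i _ => ?_))
  rw [tz]; cases hx : x i <;> simp


/-- The selection function of one EA step with mask `msk`. -/
noncomputable def eaOut (p : Fin n → ℝ) (x msk : Fin n → Bool) : Fin n → Bool :=
  if mspan p (fun i => xor (msk i) (x i)) ≤ mspan p x then (fun i => xor (msk i) (x i)) else x

lemma eaStep_eq (hn : 0 < n) (p : Fin n → ℝ) (x : Fin n → Bool) :
    eaStep hn p x = (maskPMF n hn).map (eaOut p x) := rfl

lemma Dn_eaOut_le (pv : Fin n → ℕ) (x msk : Fin n → Bool) :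
    Dn pv (eaOut (fun i => (pv i : ℝ)) x msk) ≤ Dn pv x := by
  rw [eaOut]
  split
  · rename_i h
    have := (mspan_le_iff (fun i => (pv i : ℝ)) x _).mp h
    rw [disc_eq_Dn, disc_eq_Dn] at this
    exact_mod_cast this
  · exact le_rfl

lemma dz_flip (pv : Fin n → ℕ) (x msk : Fin n → Bool) :
    dz pv (fun i => xor (msk i) (x i)) =
      dz pv x - 2 * ∑ i ∈ Finset.univ.filter (fun i => msk i = true), tz pv x i := by
  rw [dz, dz, Finset.sum_filter, Finset.mul_sum, ← Finset.sum_sub_distrib]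
  refine Finset.sum_congr rfl fun i _ => ?_
  rw [tz, tz]
  cases hm : msk i <;> cases hx : x i <;> simp [hm, hx] <;> ring

def mask1 (i : Fin n) : Fin n → Bool := fun j => decide (j = i)

def mask2 (i j : Fin n) : Fin n → Bool := fun l => decide (l = i) || decide (l = j)

lemma filter_mask1 (i : Fin n) :
    Finset.univ.filter (fun l => mask1 i l = true) = {i} := by
  ext l; simp [mask1]

lemma filter_mask2 (i j : Fin n) :
    Finset.univ.filter (fun l => mask2 i j l = true) = {i, j} := by
  ext l; simp [mask2]

lemma maskPMF_apply (hn : 0 < n) (msk : Fin n → Bool) :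
    maskPMF n hn msk = ∏ i, (if msk i then (n : ℝ≥0∞)⁻¹ else 1 - (n : ℝ≥0∞)⁻¹) := rfl

lemma maskPMF_eq (hn : 0 < n) (msk : Fin n → Bool) :
    maskPMF n hn msk = (n : ℝ≥0∞)⁻¹ ^ (Finset.univ.filter (fun l => msk l = true)).card *
      (1 - (n : ℝ≥0∞)⁻¹) ^ (n - (Finset.univ.filter (fun l => msk l = true)).card) := by
  classical
  rw [maskPMF_apply]
  rw [← Finset.prod_filter_mul_prod_filter_not Finset.univ (fun l => msk l = true)]
  congr 1
  · rw [Finset.prod_congr rfl (fun l hl => if_pos (by simpa using (Finset.mem_filter.mp hl).2)),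
      Finset.prod_const]
  · rw [Finset.prod_congr rfl
      (fun l hl => if_neg (by simpa using (Finset.mem_filter.mp hl).2)), Finset.prod_const]
    congr 1
    rw [Finset.filter_not, Finset.card_sdiff_of_subset (Finset.filter_subset _ _), Finset.card_univ,
      Fintype.card_fin]

lemma real_one_sub_inv_pow (hn2 : 2 ≤ n) : (9 : ℝ)⁻¹ ≤ (1 - (n : ℝ)⁻¹) ^ n := by
  have hn0 : (0 : ℝ) < n := by positivity
  have h1 : Real.exp (-(2 / n)) ≤ 1 - (n : ℝ)⁻¹ := by
    have hn2' : (2 : ℝ) ≤ n := by exact_mod_cast hn2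
    have h2 : (1 : ℝ) + 2 / n ≤ Real.exp (2 / n) := by
      have := Real.add_one_le_exp (2 / (n:ℝ)); linarith
    have h3 : (0 : ℝ) < 1 + 2 / n := by positivity
    have h5 : Real.exp (-(2/n)) = 1 / Real.exp (2/n) := by rw [Real.exp_neg, one_div]
    rw [h5]
    refine (one_div_le_one_div_of_le h3 h2).trans ?_
    rw [div_le_iff₀ h3]
    have e1 : (1 - (n:ℝ)⁻¹) * (1 + 2/n) = 1 + 1/n - 2/(n*n) := by field_simp; ring
    rw [e1]
    have e2 : 2/((n:ℝ)*n) ≤ 1/n := by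
      rw [div_le_div_iff₀ (by positivity) (by positivity)]
      nlinarith
    linarith
  have h4 : Real.exp (-2) ≤ (1 - (n:ℝ)⁻¹) ^ n := by
    have := pow_le_pow_left₀ (le_of_lt (Real.exp_pos _)) h1 n
    rw [← Real.exp_nat_mul] at this
    refine le_trans ?_ this
    rw [Real.exp_le_exp]
    have hne : (n:ℝ) ≠ 0 := by positivity
    have e3 : (n:ℝ) * -(2/n) = -2 := by field_simp
    rw [e3]
  refine le_trans ?_ h4
  rw [Real.exp_neg, inv_le_inv₀ (by norm_num) (Real.exp_pos _)]
  have h5 : Real.exp 2 = Real.exp 1 ^ 2 := by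
    rw [← Real.exp_nat_mul]; norm_num
  nlinarith [Real.exp_one_lt_d9, Real.exp_pos 1]

lemma ennreal_one_sub_inv (hn0 : 0 < n) :
    (1 - (n : ℝ≥0∞)⁻¹) = ENNReal.ofReal (1 - (n : ℝ)⁻¹) := by
  have hn0' : (0 : ℝ) < n := by positivity
  rw [ENNReal.ofReal_sub _ (by positivity), ENNReal.ofReal_one,
    ENNReal.ofReal_inv_of_pos hn0', ENNReal.ofReal_natCast]

lemma one_sub_inv_pow_ge (hn2 : 2 ≤ n) : (9 : ℝ≥0∞)⁻¹ ≤ (1 - (n : ℝ≥0∞)⁻¹) ^ n := by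
  have hn0 : 0 < n := by omega
  rw [ennreal_one_sub_inv hn0, ← ENNReal.ofReal_pow (by
    have hn1 : (1:ℝ) ≤ n := by exact_mod_cast hn0
    have : (n:ℝ)⁻¹ ≤ 1 := by
      rw [inv_le_one_iff₀]; right; exact hn1
    linarith)]
  have : (9 : ℝ≥0∞)⁻¹ = ENNReal.ofReal (9 : ℝ)⁻¹ := by
    rw [ENNReal.ofReal_inv_of_pos (by norm_num)]
    norm_num
  rw [this]
  exact ENNReal.ofReal_le_ofReal (real_one_sub_inv_pow hn2)

lemma one_sub_inv_pow_ge' (hn2 : 2 ≤ n) {c : ℕ} :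
    (9 : ℝ≥0∞)⁻¹ ≤ (1 - (n : ℝ≥0∞)⁻¹) ^ (n - c) := by
  refine le_trans (one_sub_inv_pow_ge hn2) ?_
  exact pow_le_pow_right_of_le_one' tsub_le_self (Nat.sub_le n c)

lemma w_mask1_ge (hn : 0 < n) (hn2 : 2 ≤ n) (i : Fin n) :
    ((9 : ℝ≥0∞) * n)⁻¹ ≤ maskPMF n hn (mask1 i) := by
  rw [maskPMF_eq, filter_mask1, Finset.card_singleton, pow_one]
  rw [ENNReal.mul_inv (by left; norm_num) (by left; norm_num), mul_comm]
  exact mul_le_mul' le_rfl (one_sub_inv_pow_ge' hn2)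

lemma w_mask2_ge (hn : 0 < n) (hn2 : 2 ≤ n) (i j : Fin n) (hij : i ≠ j) :
    ((9 : ℝ≥0∞) * n ^ 2)⁻¹ ≤ maskPMF n hn (mask2 i j) := by
  rw [maskPMF_eq, filter_mask2, Finset.card_insert_of_notMem (by simpa using hij),
    Finset.card_singleton]
  have h1 : ((9 : ℝ≥0∞) * n ^ 2)⁻¹ = ((n:ℝ≥0∞)⁻¹)^2 * (9:ℝ≥0∞)⁻¹ := by
    rw [ENNReal.mul_inv (by left; norm_num) (by left; norm_num), mul_comm, ← ENNReal.inv_pow]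
  rw [h1, show 1 + 1 = 2 from rfl]
  exact mul_le_mul' le_rfl (one_sub_inv_pow_ge' hn2)

section Pexp

variable {α β : Type*}

/-- Expectation of a nonnegative function under a `PMF`. -/
noncomputable def pexp (μ : PMF α) (f : α → ℝ≥0∞) : ℝ≥0∞ := ∑' a, μ a * f a

lemma pexp_pure (a : α) (f : α → ℝ≥0∞) : pexp (PMF.pure a) f = f a := by
  rw [pexp, tsum_eq_single a]
  · simp
  · intro b hb; simp [PMF.pure_apply, hb]

lemma pexp_bind (μ : PMF α) (κ : α → PMF β) (f : β → ℝ≥0∞) :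
    pexp (μ.bind κ) f = pexp μ fun a => pexp (κ a) f := by
  simp only [pexp, PMF.bind_apply]
  calc ∑' b, (∑' a, μ a * κ a b) * f b
      = ∑' b, ∑' a, μ a * (κ a b * f b) := by
        refine tsum_congr fun b => ?_
        rw [← ENNReal.tsum_mul_right]
        exact tsum_congr fun a => mul_assoc _ _ _
    _ = ∑' a, ∑' b, μ a * (κ a b * f b) := ENNReal.tsum_comm
    _ = ∑' a, μ a * ∑' b, κ a b * f b := tsum_congr fun a => ENNReal.tsum_mul_left

lemma pexp_map (μ : PMF α) (g : α → β) (f : β → ℝ≥0∞) :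
    pexp (μ.map g) f = pexp μ fun a => f (g a) := by
  rw [PMF.map, pexp_bind]
  refine congrArg (pexp μ) ?_
  funext a
  simp [pexp_pure]

lemma pexp_mono (μ : PMF α) {f g : α → ℝ≥0∞} (h : ∀ a, f a ≤ g a) :
    pexp μ f ≤ pexp μ g :=
  ENNReal.tsum_le_tsum fun a => mul_le_mul' le_rfl (h a)

lemma pexp_const (μ : PMF α) (c : ℝ≥0∞) : pexp μ (fun _ => c) = c := by
  rw [pexp, ENNReal.tsum_mul_right, PMF.tsum_coe, one_mul]

lemma pexp_const_mul (μ : PMF α) (c : ℝ≥0∞) (f : α → ℝ≥0∞) :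
    pexp μ (fun a => c * f a) = c * pexp μ f := by
  rw [pexp, pexp, ← ENNReal.tsum_mul_left]
  exact tsum_congr fun a => by ring

lemma toOuterMeasure_le_pexp (μ : PMF α) (f : α → ℝ≥0∞) (s : Set α)
    (h : ∀ a ∈ s, 1 ≤ f a) : μ.toOuterMeasure s ≤ pexp μ f := by
  rw [PMF.toOuterMeasure_apply]
  refine ENNReal.tsum_le_tsum fun a => ?_
  by_cases ha : a ∈ s
  · rw [Set.indicator_of_mem ha]
    calc μ a = μ a * 1 := (mul_one _).symm
      _ ≤ μ a * f a := mul_le_mul' le_rfl (h a ha)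
  · simp [Set.indicator_of_notMem ha]

lemma pexp_le_const (μ : PMF α) (f : α → ℝ≥0∞) (c : ℝ≥0∞) (h : ∀ a, f a ≤ c) :
    pexp μ f ≤ c := by
  calc pexp μ f ≤ pexp μ (fun _ => c) := pexp_mono μ h
    _ = c := pexp_const μ c

end Pexp


/-! ### The window property and the key drift step -/

/-- Every integer window of length `m` inside `[1, n]` contains some job value. -/
def WinGood (n m : ℕ) (pv : Fin n → ℕ) : Prop :=
  ∀ a : ℕ, a + m ≤ n → ∃ i, a + 1 ≤ pv i ∧ pv i ≤ a + m

lemma key_natAbs {σ z Δ : ℤ} (hσ : σ = 1 ∨ σ = -1) (hΔ1 : 1 ≤ Δ) (hΔ2 : Δ + 1 ≤ σ * z) :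
    (z - 2 * (σ * Δ)).natAbs + 2 ≤ z.natAbs := by
  have hσ2 : σ * σ = 1 := by rcases hσ with h | h <;> simp [h]
  have habs : ∀ w : ℤ, |σ * w| = |w| := by
    rcases hσ with h | h <;> intro w <;> simp [h, abs_mul]
  have h1 : |z - 2 * (σ * Δ)| = |σ * z - 2 * Δ| := by
    rw [← habs (z - 2 * (σ * Δ))]
    congr 1
    have : σ * (z - 2 * (σ * Δ)) = σ * z - 2 * (σ * σ) * Δ := by ring
    rw [this, hσ2]; ring
  have h2 : |σ * z - 2 * Δ| + 2 ≤ |z| := by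
    rw [← habs z, abs_of_pos (show (0:ℤ) < σ * z by linarith)]
    have h4 : |σ * z - 2 * Δ| ≤ σ * z - 2 := abs_le.mpr ⟨by linarith, by linarith⟩
    linarith
  have h3 : ((z - 2 * (σ * Δ)).natAbs : ℤ) + 2 ≤ (z.natAbs : ℤ) := by
    rw [← Int.abs_eq_natAbs, ← Int.abs_eq_natAbs, h1]
    exact h2
  exact_mod_cast h3

lemma Dn_le_nsq (pv : Fin n → ℕ) (hIcc : ∀ j, 1 ≤ pv j ∧ pv j ≤ n) (x : Fin n → Bool) :
    Dn pv x ≤ n ^ 2 := by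
  refine (Dn_le_sum pv x).trans ?_
  calc ∑ i, pv i ≤ ∑ _i : Fin n, n := Finset.sum_le_sum fun i _ => (hIcc i).2
    _ = n ^ 2 := by simp [sq]

lemma eps_helper (hn0 : 0 < n) {c : ℕ} (hc : c ≤ 3) {D : ℕ}
    (hD : (D : ℝ≥0∞) ≤ (n : ℝ≥0∞) ^ c) :
    ((9 : ℝ≥0∞) * (n : ℝ≥0∞) ^ 3)⁻¹ * D ≤ ((9 : ℝ≥0∞) * (n : ℝ≥0∞) ^ (3 - c))⁻¹ := by
  have hne : ((n : ℝ≥0∞)) ^ c ≠ 0 := pow_ne_zero _ (Nat.cast_ne_zero.mpr hn0.ne')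
  have htop : ((n : ℝ≥0∞)) ^ c ≠ ∞ := ENNReal.pow_ne_top (ENNReal.natCast_ne_top n)
  calc ((9 : ℝ≥0∞) * (n:ℝ≥0∞) ^ 3)⁻¹ * D ≤ ((9 : ℝ≥0∞) * (n:ℝ≥0∞) ^ 3)⁻¹ * (n:ℝ≥0∞) ^ c := by
        exact mul_le_mul' le_rfl hD
    _ = ((9 : ℝ≥0∞) * (n:ℝ≥0∞) ^ (3 - c))⁻¹ := by
        rw [show (9 : ℝ≥0∞) * (n:ℝ≥0∞) ^ 3 = ((9 : ℝ≥0∞) * (n:ℝ≥0∞) ^ (3 - c)) * (n:ℝ≥0∞) ^ c by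
          rw [mul_assoc, pow_sub_mul_pow _ hc]]
        rw [ENNReal.mul_inv (Or.inl (by
          refine mul_ne_zero (by norm_num) (pow_ne_zero _ (Nat.cast_ne_zero.mpr hn0.ne'))))
          (Or.inl (ENNReal.mul_ne_top (by norm_num) (ENNReal.pow_ne_top (ENNReal.natCast_ne_top n))))]
        rw [mul_assoc, ENNReal.inv_mul_cancel hne htop, mul_one]

lemma Dn_eaOut_eq {pv : Fin n → ℕ} {x msk : Fin n → Bool}
    (h : Dn pv (fun i => xor (msk i) (x i)) ≤ Dn pv x) :
    Dn pv (eaOut (fun i => (pv i : ℝ)) x msk) = Dn pv (fun i => xor (msk i) (x i)) := by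
  rw [eaOut, if_pos]
  rw [mspan_le_iff, disc_eq_Dn, disc_eq_Dn]
  exact_mod_cast h

/-- Core combinatorial lemma: from any bad solution there is a 1- or 2-bit flip
which is accepted, decreases the discrepancy by at least 2, and whose mask has
sufficiently large probability. -/
lemma exists_good_mask (hn : 0 < n) (hn2 : 2 ≤ n) {m : ℕ} (hm : 1 ≤ m)
    {pv : Fin n → ℕ} (hIcc : ∀ j, 1 ≤ pv j ∧ pv j ≤ n) (hwin : WinGood n m pv)
    {x : Fin n → Bool} (hbad : m < Dn pv x) :
    ∃ msk : Fin n → Bool,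
      Dn pv (eaOut (fun i => (pv i : ℝ)) x msk) + 2 ≤ Dn pv x ∧
      ((9 : ℝ≥0∞) * (n : ℝ≥0∞) ^ 3)⁻¹ * (Dn pv x) ≤ 2 * maskPMF n hn msk := by
  classical
  set D := Dn pv x with hDdef
  have hD0 : 0 < D := lt_of_le_of_lt (Nat.zero_le m) hbad
  have hdz0 : dz pv x ≠ 0 := fun h => by simp [hDdef, Dn, h] at hD0
  set σ : ℤ := if 0 < dz pv x then 1 else -1 with hσdef
  have hσ : σ = 1 ∨ σ = -1 := by
    rw [hσdef]; split <;> simp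
  have hσD : σ * dz pv x = (D : ℤ) := by
    rw [hσdef, hDdef, Dn]
    split
    · rename_i h
      rw [one_mul, Int.natAbs_of_nonneg (le_of_lt h)]
    · rename_i h
      push_neg at h
      rw [← Int.abs_eq_natAbs, abs_of_nonpos h]; ring
  have ht : ∀ i, tz pv x i = σ * pv i ∨ tz pv x i = -(σ * (pv i : ℤ)) := by
    intro i
    rcases hσ with h | h <;> rw [h] <;> rw [tz] <;> cases hx : x i <;> simp [hx]
  set Ffin : Finset (Fin n) :=
    Finset.univ.filter (fun i => tz pv x i = σ * (pv i : ℤ)) with hFdef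
  have hFne : Ffin.Nonempty := by
    by_contra hne
    rw [Finset.not_nonempty_iff_eq_empty, Finset.filter_eq_empty_iff] at hne
    have hall : ∀ i, tz pv x i = -(σ * (pv i : ℤ)) := by
      intro i
      rcases ht i with h | h
      · exact absurd h (hne (Finset.mem_univ i))
      · exact h
    have hσσ : σ * σ = 1 := by rcases hσ with h | h <;> rw [h] <;> norm_num
    have hcontr : σ * dz pv x = -(σ * σ * ∑ i, (pv i : ℤ)) := by
      have e : ∀ i ∈ Finset.univ, σ * tz pv x i = -(σ * σ * (pv i : ℤ)) :=
        fun i _ => by rw [hall i]; ring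
      rw [dz, Finset.mul_sum, Finset.sum_congr rfl e, Finset.sum_neg_distrib, ← Finset.mul_sum]
    rw [hσσ, one_mul, hσD] at hcontr
    have hsum_pos : (0 : ℤ) < ∑ i, (pv i : ℤ) := by
      haveI : Nonempty (Fin n) := Fin.pos_iff_nonempty.mp hn
      exact Finset.sum_pos (fun i _ => by exact_mod_cast (hIcc i).1) Finset.univ_nonempty
    have hD0' : (0 : ℤ) ≤ (D : ℤ) := Int.natCast_nonneg D
    linarith
  have hDcast : (D : ℝ≥0∞) ≤ (n : ℝ≥0∞) ^ 2 := by
    have h := Dn_le_nsq pv hIcc x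
    calc (D : ℝ≥0∞) ≤ ((n ^ 2 : ℕ) : ℝ≥0∞) := Nat.cast_le.mpr h
      _ = (n : ℝ≥0∞) ^ 2 := by push_cast; rfl
  by_cases hA : ∃ i ∈ Ffin, pv i < D
  · obtain ⟨i, hiF, hiD⟩ := hA
    have hti : tz pv x i = σ * pv i := (Finset.mem_filter.mp hiF).2
    refine ⟨mask1 i, ?_, ?_⟩
    · have hflip : dz pv (fun j => xor (mask1 i j) (x j))
          = dz pv x - 2 * (σ * (pv i : ℤ)) := by
        rw [dz_flip, filter_mask1, Finset.sum_singleton, hti]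
      have hkey := key_natAbs (σ := σ) (z := dz pv x) (Δ := (pv i : ℤ)) hσ
        (by exact_mod_cast (hIcc i).1) (by rw [hσD]; omega)
      rw [← hflip] at hkey
      have hy : Dn pv (fun j => xor (mask1 i j) (x j)) + 2 ≤ D := by
        rw [Dn, hflip, hDdef, Dn, ← hflip]; exact hkey
      rw [Dn_eaOut_eq (by omega)]
      exact hy
    · calc ((9 : ℝ≥0∞) * (n : ℝ≥0∞) ^ 3)⁻¹ * D
          ≤ ((9 : ℝ≥0∞) * (n : ℝ≥0∞) ^ (3 - 2))⁻¹ := eps_helper hn (by norm_num) hDcast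
        _ = ((9 : ℝ≥0∞) * (n : ℝ≥0∞))⁻¹ := by norm_num
        _ ≤ maskPMF n hn (mask1 i) := w_mask1_ge hn hn2 i
        _ ≤ 2 * maskPMF n hn (mask1 i) := le_mul_of_one_le_left zero_le one_le_two
  · push_neg at hA
    obtain ⟨i₀, hi₀F, hmin⟩ := Ffin.exists_min_image pv hFne
    have hti₀ : tz pv x i₀ = σ * pv i₀ := (Finset.mem_filter.mp hi₀F).2
    have hDs : D ≤ pv i₀ := hA i₀ hi₀F
    have hsn : pv i₀ ≤ n := (hIcc i₀).2
    have hDn : D ≤ n := le_trans hDs hsn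
    have hms : m + 1 ≤ pv i₀ := by omega
    obtain ⟨j, hj1, hj2⟩ := hwin (pv i₀ - m - 1) (by omega)
    have hjlt : pv j < pv i₀ := by omega
    have hjge : pv i₀ - m ≤ pv j := by omega
    have hjF : j ∉ Ffin := fun hj => absurd (hmin j hj) (not_le.mpr hjlt)
    have hij : i₀ ≠ j := fun h => by rw [h] at hjlt; omega
    have htj : tz pv x j = -(σ * pv j) := by
      rcases ht j with h | h
      · exact absurd (Finset.mem_filter.mpr ⟨Finset.mem_univ j, h⟩) hjF
      · exact h
    refine ⟨mask2 i₀ j, ?_, ?_⟩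
    · have hflip : dz pv (fun l => xor (mask2 i₀ j l) (x l))
          = dz pv x - 2 * (σ * ((pv i₀ : ℤ) - pv j)) := by
        rw [dz_flip, filter_mask2, Finset.sum_pair hij, hti₀, htj]; ring
      have hkey := key_natAbs (σ := σ) (z := dz pv x) (Δ := (pv i₀ : ℤ) - pv j) hσ
        (by omega) (by rw [hσD]; omega)
      rw [← hflip] at hkey
      have hy : Dn pv (fun l => xor (mask2 i₀ j l) (x l)) + 2 ≤ D := by
        rw [Dn, hflip, hDdef, Dn, ← hflip]; exact hkey
      rw [Dn_eaOut_eq (by omega)]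
      exact hy
    · have hDcast1 : (D : ℝ≥0∞) ≤ (n : ℝ≥0∞) ^ 1 := by
        rw [pow_one]; exact_mod_cast Nat.cast_le.mpr hDn
      calc ((9 : ℝ≥0∞) * (n : ℝ≥0∞) ^ 3)⁻¹ * D
          ≤ ((9 : ℝ≥0∞) * (n : ℝ≥0∞) ^ (3 - 1))⁻¹ := eps_helper hn (by norm_num) hDcast1
        _ = ((9 : ℝ≥0∞) * (n : ℝ≥0∞) ^ 2)⁻¹ := by norm_num
        _ ≤ maskPMF n hn (mask2 i₀ j) := w_mask2_ge hn hn2 i₀ j hij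
        _ ≤ 2 * maskPMF n hn (mask2 i₀ j) := le_mul_of_one_le_left zero_le one_le_two

/-! ### Per-step drift and run analysis -/

/-- Potential function: discrepancy, truncated to zero on good states. -/
noncomputable def ZD (m : ℕ) (pv : Fin n → ℕ) (x : Fin n → Bool) : ℝ≥0∞ :=
  if m < Dn pv x then (Dn pv x : ℝ≥0∞) else 0

lemma ZD_le_Dn (m : ℕ) (pv : Fin n → ℕ) (x : Fin n → Bool) :
    ZD m pv x ≤ (Dn pv x : ℝ≥0∞) := by
  rw [ZD]; split
  · exact le_rfl
  · exact zero_le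

lemma drift_algebra {w D ε : ℝ≥0∞} (hw1 : w ≤ 1) (hD : D ≠ ∞) (hD2 : 2 ≤ D)
    (hε : ε * D ≤ 2 * w) :
    w * (D - 2) + (1 - w) * D ≤ (1 - ε) * D := by
  have hwtop : w ≠ ∞ := ne_top_of_le_ne_top ENNReal.one_ne_top hw1
  have h1 : w * (D - 2) = w * D - w * 2 := ENNReal.mul_sub (fun _ _ => hwtop)
  have h2 : (1 - w) * D = 1 * D - w * D := ENNReal.sub_mul (fun _ _ => hD)
  rw [h1, h2, one_mul]
  have h3 : w * D ≤ D := by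
    calc w * D ≤ 1 * D := mul_le_mul' hw1 le_rfl
      _ = D := one_mul D
  have h4 : w * 2 ≤ w * D := mul_le_mul' le_rfl hD2
  rw [add_comm, tsub_add_tsub_cancel h3 h4]
  have h5 : (1 - ε) * D = 1 * D - ε * D := ENNReal.sub_mul (fun _ _ => hD)
  rw [h5, one_mul]
  exact tsub_le_tsub_left (le_trans hε (le_of_eq (mul_comm _ _))) D

lemma pexp_eaStep_le (hn : 0 < n) (hn2 : 2 ≤ n) {m : ℕ} (hm : 1 ≤ m)
    {pv : Fin n → ℕ} (hIcc : ∀ j, 1 ≤ pv j ∧ pv j ≤ n) (hwin : WinGood n m pv)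
    (x : Fin n → Bool) :
    pexp (eaStep hn (fun i => (pv i : ℝ)) x) (ZD m pv)
      ≤ (1 - ((9 : ℝ≥0∞) * (n : ℝ≥0∞) ^ 3)⁻¹) * ZD m pv x := by
  classical
  rw [eaStep_eq, pexp_map]
  by_cases hbad : m < Dn pv x
  · obtain ⟨msk₀, hdrop, hwt⟩ := exists_good_mask hn hn2 hm hIcc hwin hbad
    have hZx : ZD m pv x = (Dn pv x : ℝ≥0∞) := if_pos hbad
    rw [pexp, tsum_fintype]
    rw [← Finset.add_sum_erase Finset.univ
      (fun msk => maskPMF n hn msk * ZD m pv (eaOut (fun i => (pv i : ℝ)) x msk))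
      (Finset.mem_univ msk₀)]
    have hsum1 : ∑ msk, maskPMF n hn msk = 1 := by
      rw [← tsum_fintype (L := SummationFilter.unconditional _)]; exact (maskPMF n hn).tsum_coe
    have herase : ∑ msk ∈ Finset.univ.erase msk₀, maskPMF n hn msk
        = 1 - maskPMF n hn msk₀ := by
      refine ENNReal.eq_sub_of_add_eq (ne_top_of_le_ne_top ENNReal.one_ne_top ((maskPMF n hn).coe_le_one msk₀)) ?_
      rw [add_comm]
      rw [Finset.add_sum_erase Finset.univ (fun msk => maskPMF n hn msk) (Finset.mem_univ msk₀)]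
      exact hsum1
    have hw1 : maskPMF n hn msk₀ ≤ 1 := (maskPMF n hn).coe_le_one msk₀
    have hDtop : (Dn pv x : ℝ≥0∞) ≠ ∞ := ENNReal.natCast_ne_top _
    have hD2 : (2 : ℝ≥0∞) ≤ (Dn pv x : ℝ≥0∞) := by
      have : 2 ≤ Dn pv x := by omega
      exact_mod_cast Nat.cast_le.mpr this
    have hZ0 : ZD m pv (eaOut (fun i => (pv i : ℝ)) x msk₀) ≤ (Dn pv x : ℝ≥0∞) - 2 := by
      refine le_trans (ZD_le_Dn m pv _) ?_
      have hnat : Dn pv (eaOut (fun i => (pv i : ℝ)) x msk₀) ≤ Dn pv x - 2 := by omega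
      calc (Dn pv (eaOut (fun i => (pv i : ℝ)) x msk₀) : ℝ≥0∞)
          ≤ ((Dn pv x - 2 : ℕ) : ℝ≥0∞) := Nat.cast_le.mpr hnat
        _ = (Dn pv x : ℝ≥0∞) - 2 := by
            rw [ENNReal.natCast_sub]; norm_num
    calc maskPMF n hn msk₀ * ZD m pv (eaOut (fun i => (pv i : ℝ)) x msk₀)
          + ∑ msk ∈ Finset.univ.erase msk₀,
              maskPMF n hn msk * ZD m pv (eaOut (fun i => (pv i : ℝ)) x msk)
        ≤ maskPMF n hn msk₀ * ((Dn pv x : ℝ≥0∞) - 2)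
          + (1 - maskPMF n hn msk₀) * (Dn pv x : ℝ≥0∞) := by
          refine add_le_add (mul_le_mul' le_rfl hZ0) ?_
          calc ∑ msk ∈ Finset.univ.erase msk₀,
                maskPMF n hn msk * ZD m pv (eaOut (fun i => (pv i : ℝ)) x msk)
              ≤ ∑ msk ∈ Finset.univ.erase msk₀, maskPMF n hn msk * (Dn pv x : ℝ≥0∞) := by
                refine Finset.sum_le_sum fun msk _ => mul_le_mul' le_rfl ?_
                exact le_trans (ZD_le_Dn m pv _) (Nat.cast_le.mpr (Dn_eaOut_le pv x msk))
            _ = (1 - maskPMF n hn msk₀) * (Dn pv x : ℝ≥0∞) := by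
                rw [← Finset.sum_mul, herase]
      _ ≤ (1 - ((9 : ℝ≥0∞) * (n : ℝ≥0∞) ^ 3)⁻¹) * (Dn pv x : ℝ≥0∞) :=
          drift_algebra hw1 hDtop hD2 hwt
      _ = (1 - ((9 : ℝ≥0∞) * (n : ℝ≥0∞) ^ 3)⁻¹) * ZD m pv x := by rw [hZx]
  · push_neg at hbad
    have hall : ∀ msk : Fin n → Bool, ZD m pv (eaOut (fun i => (pv i : ℝ)) x msk) = 0 := by
      intro msk
      rw [ZD, if_neg]
      push_neg
      exact le_trans (Dn_eaOut_le pv x msk) hbad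
    calc pexp (maskPMF n hn) (fun msk => ZD m pv (eaOut (fun i => (pv i : ℝ)) x msk))
        ≤ 0 := pexp_le_const _ _ 0 (fun msk => le_of_eq (hall msk))
      _ ≤ _ := zero_le

lemma pexp_run_le (hn : 0 < n) (hn2 : 2 ≤ n) {m : ℕ} (hm : 1 ≤ m)
    {pv : Fin n → ℕ} (hIcc : ∀ j, 1 ≤ pv j ∧ pv j ≤ n) (hwin : WinGood n m pv)
    (x₀ : Fin n → Bool) (t : ℕ) :
    pexp (run (eaStep hn) (fun _ i => (pv i : ℝ)) (x₀, fun i => (pv i : ℝ)) t)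
        (fun h => ZD m pv h.headI.1)
      ≤ (1 - ((9 : ℝ≥0∞) * (n : ℝ≥0∞) ^ 3)⁻¹) ^ t * (n : ℝ≥0∞) ^ 2 := by
  induction t with
  | zero =>
      rw [run, pexp_pure]
      simp only [pow_zero, one_mul]
      refine le_trans (ZD_le_Dn m pv _) ?_
      have h := Dn_le_nsq pv hIcc ((([(x₀, fun i => (pv i : ℝ))] : List (Cfg n)).headI).1)
      calc (Dn pv _ : ℝ≥0∞) ≤ ((n ^ 2 : ℕ) : ℝ≥0∞) := Nat.cast_le.mpr h
        _ = (n : ℝ≥0∞) ^ 2 := by push_cast; rfl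
  | succ t ih =>
      rw [run, pexp_bind]
      have hstep : ∀ h : List (Cfg n),
          pexp ((eaStep hn ((fun (_ : List (Cfg n)) i => (pv i : ℝ)) h) h.headI.1).map
              fun x' => (x', (fun (_ : List (Cfg n)) i => (pv i : ℝ)) h) :: h)
            (fun h' => ZD m pv h'.headI.1)
          ≤ (1 - ((9 : ℝ≥0∞) * (n : ℝ≥0∞) ^ 3)⁻¹) * ZD m pv h.headI.1 := by
        intro h
        rw [pexp_map]
        exact pexp_eaStep_le hn hn2 hm hIcc hwin h.headI.1
      calc pexp (run (eaStep hn) (fun _ i => (pv i : ℝ)) (x₀, fun i => (pv i : ℝ)) t)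
            (fun h => pexp ((eaStep hn ((fun (_ : List (Cfg n)) i => (pv i : ℝ)) h) h.headI.1).map
              fun x' => (x', (fun (_ : List (Cfg n)) i => (pv i : ℝ)) h) :: h)
              (fun h' => ZD m pv h'.headI.1))
          ≤ pexp (run (eaStep hn) (fun _ i => (pv i : ℝ)) (x₀, fun i => (pv i : ℝ)) t)
              (fun h => (1 - ((9 : ℝ≥0∞) * (n : ℝ≥0∞) ^ 3)⁻¹) * ZD m pv h.headI.1) :=
            pexp_mono _ hstep
        _ = (1 - ((9 : ℝ≥0∞) * (n : ℝ≥0∞) ^ 3)⁻¹) *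
              pexp (run (eaStep hn) (fun _ i => (pv i : ℝ)) (x₀, fun i => (pv i : ℝ)) t)
                (fun h => ZD m pv h.headI.1) := pexp_const_mul _ _ _
        _ ≤ (1 - ((9 : ℝ≥0∞) * (n : ℝ≥0∞) ^ 3)⁻¹) *
              ((1 - ((9 : ℝ≥0∞) * (n : ℝ≥0∞) ^ 3)⁻¹) ^ t * (n : ℝ≥0∞) ^ 2) :=
            mul_le_mul' le_rfl ih
        _ = (1 - ((9 : ℝ≥0∞) * (n : ℝ≥0∞) ^ 3)⁻¹) ^ (t + 1) * (n : ℝ≥0∞) ^ 2 := by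
            rw [← mul_assoc, ← pow_succ']

lemma run_support_ne_nil {step : (Fin n → ℝ) → (Fin n → Bool) → PMF (Fin n → Bool)}
    {adv : List (Cfg n) → (Fin n → ℝ)} {init : Cfg n} (t : ℕ) :
    ∀ h ∈ (run step adv init t).support, h ≠ [] := by
  induction t with
  | zero =>
      intro h hh
      rw [run, PMF.support_pure] at hh
      rw [Set.mem_singleton_iff] at hh
      rw [hh]
      simp
  | succ t ih =>
      intro h hh
      rw [run] at hh
      rw [PMF.mem_support_bind_iff] at hh
      obtain ⟨h', _, hh2⟩ := hh
      rw [PMF.mem_support_map_iff] at hh2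
      obtain ⟨x', _, rfl⟩ := hh2
      simp

lemma pmf_meas_add_compl {α : Type*} (p : PMF α) (s : Set α) :
    p.toOuterMeasure s + p.toOuterMeasure sᶜ = 1 := by
  classical
  rw [PMF.toOuterMeasure_apply, PMF.toOuterMeasure_apply, ← ENNReal.tsum_add]
  have h : ∀ a, s.indicator p a + sᶜ.indicator p a = p a := by
    intro a
    by_cases ha : a ∈ s
    · rw [Set.indicator_of_mem ha, Set.indicator_of_notMem (by simpa using ha), add_zero]
    · rw [Set.indicator_of_notMem ha, Set.indicator_of_mem (by simpa using ha), zero_add]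
  rw [tsum_congr h, PMF.tsum_coe]

lemma pmf_one_sub_compl_le {α : Type*} (p : PMF α) (s : Set α) :
    1 - p.toOuterMeasure sᶜ ≤ p.toOuterMeasure s := by
  rw [← pmf_meas_add_compl p s]
  exact tsub_le_iff_right.mpr le_rfl

section Prob

open MeasureTheory

lemma mu_window_le (hn : 0 < n) {μ : PMF (Fin n → ℕ)}
    (hμ : ∀ f, μ f = if ∀ j, f j ∈ Finset.Icc 1 n then ((n : ℝ≥0∞))⁻¹ ^ n else 0)
    {m a : ℕ} (hm : 1 ≤ m) (hwin : a + m ≤ n) :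
    μ.toOuterMeasure {pv : Fin n → ℕ | ∀ i, ¬(a + 1 ≤ pv i ∧ pv i ≤ a + m)}
      ≤ ENNReal.ofReal (Real.exp (-(m : ℝ))) := by
  classical
  have hmn : m ≤ n := by omega
  set W : Set (Fin n → ℕ) := {pv | ∀ i, ¬(a + 1 ≤ pv i ∧ pv i ≤ a + m)} with hW
  set S : Finset ℕ := Finset.Icc 1 n \ Finset.Icc (a + 1) (a + m) with hS
  set Fs := Fintype.piFinset (fun _ : Fin n => S) with hFs
  rw [PMF.toOuterMeasure_apply]
  have hzero : ∀ f ∉ Fs, W.indicator μ f = 0 := by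
    intro f hf
    rw [hFs, Fintype.mem_piFinset] at hf
    push_neg at hf
    obtain ⟨j, hj⟩ := hf
    rw [hS, Finset.mem_sdiff] at hj
    push_neg at hj
    by_cases hIcc : f j ∈ Finset.Icc 1 n
    · have hw := hj hIcc
      rw [Finset.mem_Icc] at hw
      refine Set.indicator_of_notMem ?_ μ
      rw [hW, Set.mem_setOf_eq]
      push_neg
      exact ⟨j, hw.1, hw.2⟩
    · by_cases hfin : f ∈ W
      · rw [Set.indicator_of_mem hfin, hμ, if_neg (fun hall => hIcc (hall j))]
      · rw [Set.indicator_of_notMem hfin]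
  rw [tsum_eq_sum hzero]
  have hval : ∀ f ∈ Fs, W.indicator μ f = ((n : ℝ≥0∞))⁻¹ ^ n := by
    intro f hf
    rw [hFs, Fintype.mem_piFinset] at hf
    have hmem : f ∈ W := by
      rw [hW, Set.mem_setOf_eq]
      intro i hi
      have := hf i
      rw [hS, Finset.mem_sdiff] at this
      exact this.2 (Finset.mem_Icc.mpr ⟨hi.1, hi.2⟩)
    rw [Set.indicator_of_mem hmem, hμ,
      if_pos (fun j => (Finset.mem_sdiff.mp (hf j)).1)]
  rw [Finset.sum_congr rfl hval, Finset.sum_const]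
  have hsubIcc : Finset.Icc (a + 1) (a + m) ⊆ Finset.Icc 1 n := by
    intro z hz
    rw [Finset.mem_Icc] at *
    omega
  have hcard : Fs.card = (n - m) ^ n := by
    rw [hFs, Fintype.card_piFinset]
    have hScard : S.card = n - m := by
      rw [hS, Finset.card_sdiff_of_subset hsubIcc, Nat.card_Icc, Nat.card_Icc]
      omega
    simp [hScard]
  rw [hcard, nsmul_eq_mul]
  have hstep1 : ((((n - m) ^ n : ℕ)) : ℝ≥0∞) = (((n - m : ℕ) : ℝ≥0∞)) ^ n := by push_cast; rfl
  rw [hstep1, ← mul_pow]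
  have hbase : ((n - m : ℕ) : ℝ≥0∞) * ((n : ℝ≥0∞))⁻¹
      ≤ ENNReal.ofReal (Real.exp (-((m : ℝ) / n))) := by
    have hn0 : (0 : ℝ) < n := by positivity
    have heq : ((n - m : ℕ) : ℝ≥0∞) * ((n : ℝ≥0∞))⁻¹
        = ENNReal.ofReal (((n - m : ℕ) : ℝ) * (n : ℝ)⁻¹) := by
      rw [ENNReal.ofReal_mul (by positivity), ENNReal.ofReal_natCast,
        ENNReal.ofReal_inv_of_pos hn0, ENNReal.ofReal_natCast]
    rw [heq]
    refine ENNReal.ofReal_le_ofReal ?_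
    have h1 : ((n - m : ℕ) : ℝ) = (n : ℝ) - m := by
      rw [Nat.cast_sub hmn]
    have h2 : -((m : ℝ) / n) + 1 ≤ Real.exp (-((m : ℝ) / n)) := Real.add_one_le_exp _
    have h3 : ((n : ℝ) - m) * (n : ℝ)⁻¹ = 1 - (m : ℝ) / n := by field_simp
    rw [h1, h3]
    linarith
  calc (((n - m : ℕ) : ℝ≥0∞) * ((n : ℝ≥0∞))⁻¹) ^ n
      ≤ ENNReal.ofReal (Real.exp (-((m : ℝ) / n))) ^ n := pow_le_pow_left' hbase n
    _ = ENNReal.ofReal (Real.exp (-((m : ℝ) / n)) ^ n) :=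
        (ENNReal.ofReal_pow (le_of_lt (Real.exp_pos _)) n).symm
    _ ≤ ENNReal.ofReal (Real.exp (-(m : ℝ))) := by
        refine ENNReal.ofReal_le_ofReal ?_
        rw [← Real.exp_nat_mul, Real.exp_le_exp]
        have hn0 : (n : ℝ) ≠ 0 := by positivity
        rw [show (n : ℝ) * -((m : ℝ) / n) = -(m : ℝ) by field_simp]

lemma mu_not_winGood_le (hn : 0 < n) {μ : PMF (Fin n → ℕ)}
    (hμ : ∀ f, μ f = if ∀ j, f j ∈ Finset.Icc 1 n then ((n : ℝ≥0∞))⁻¹ ^ n else 0)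
    {m : ℕ} (hm : 1 ≤ m) (hmn : m ≤ n) :
    μ.toOuterMeasure {pv : Fin n → ℕ | ¬ WinGood n m pv}
      ≤ (n : ℝ≥0∞) * ENNReal.ofReal (Real.exp (-(m : ℝ))) := by
  classical
  have hsub : {pv : Fin n → ℕ | ¬ WinGood n m pv}
      ⊆ ⋃ a ∈ Finset.range n,
          {pv : Fin n → ℕ | a + m ≤ n ∧ ∀ i, ¬(a + 1 ≤ pv i ∧ pv i ≤ a + m)} := by
    intro pv hpv
    rw [Set.mem_setOf_eq, WinGood] at hpv
    push_neg at hpv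
    obtain ⟨a, ha, hall⟩ := hpv
    refine Set.mem_iUnion₂.mpr ⟨a, Finset.mem_range.mpr (by omega), ?_⟩
    rw [Set.mem_setOf_eq]
    exact ⟨ha, fun i hi => absurd (hall i hi.1) (not_lt.mpr hi.2)⟩
  refine le_trans (measure_mono hsub) ?_
  refine le_trans (measure_biUnion_finset_le _ _) ?_
  have hbound : ∀ a ∈ Finset.range n,
      μ.toOuterMeasure {pv : Fin n → ℕ | a + m ≤ n ∧ ∀ i, ¬(a + 1 ≤ pv i ∧ pv i ≤ a + m)}
        ≤ ENNReal.ofReal (Real.exp (-(m : ℝ))) := by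
    intro a _
    by_cases hwin : a + m ≤ n
    · refine le_trans (measure_mono ?_) (mu_window_le hn hμ hm hwin)
      exact fun pv hpv => hpv.2
    · have : {pv : Fin n → ℕ | a + m ≤ n ∧ ∀ i, ¬(a + 1 ≤ pv i ∧ pv i ≤ a + m)} = ∅ := by
        ext pv; simp only [Set.mem_setOf_eq, Set.mem_empty_iff_false, iff_false]
        exact fun h => hwin h.1
      rw [this]
      simp
  refine le_trans (Finset.sum_le_sum hbound) ?_
  rw [Finset.sum_const, Finset.card_range, nsmul_eq_mul]

lemma run_good_prob (hn : 0 < n) (hn2 : 2 ≤ n) {m : ℕ} (hm : 1 ≤ m)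
    {pv : Fin n → ℕ} (hIcc : ∀ j, 1 ≤ pv j ∧ pv j ≤ n) (hwin : WinGood n m pv)
    (x₀ : Fin n → Bool) (t : ℕ) :
    1 - (1 - ((9 : ℝ≥0∞) * (n : ℝ≥0∞) ^ 3)⁻¹) ^ t * (n : ℝ≥0∞) ^ 2
      ≤ (run (eaStep hn) (fun _ i => (pv i : ℝ)) (x₀, fun i => (pv i : ℝ)) t).toOuterMeasure
          {h : List (Cfg n) | h ≠ [] ∧ Dn pv h.headI.1 ≤ m} := by
  set R := run (eaStep hn) (fun _ i => (pv i : ℝ)) (x₀, fun i => (pv i : ℝ)) t with hR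
  have hcompl : R.toOuterMeasure {h : List (Cfg n) | h ≠ [] ∧ Dn pv h.headI.1 ≤ m}ᶜ
      ≤ (1 - ((9 : ℝ≥0∞) * (n : ℝ≥0∞) ^ 3)⁻¹) ^ t * (n : ℝ≥0∞) ^ 2 := by
    have hsub : {h : List (Cfg n) | h ≠ [] ∧ Dn pv h.headI.1 ≤ m}ᶜ
        ⊆ {h : List (Cfg n) | m < Dn pv h.headI.1} ∪ {h : List (Cfg n) | h = []} := by
      intro h hh
      rw [Set.mem_compl_iff, Set.mem_setOf_eq] at hh
      push_neg at hh
      by_cases he : h = []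
      · exact Or.inr he
      · exact Or.inl (hh he)
    refine le_trans (measure_mono hsub) ?_
    refine le_trans (measure_union_le _ _) ?_
    have h0 : R.toOuterMeasure {h : List (Cfg n) | h = []} = 0 := by
      rw [PMF.toOuterMeasure_apply_eq_zero_iff]
      refine Set.disjoint_left.mpr ?_
      intro h hsup hmem
      exact run_support_ne_nil t h hsup hmem
    rw [h0, add_zero]
    refine le_trans (toOuterMeasure_le_pexp R (fun h => ZD m pv h.headI.1) _ ?_) ?_
    · intro h hh
      rw [Set.mem_setOf_eq] at hh
      show (1 : ℝ≥0∞) ≤ ZD m pv h.headI.1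
      rw [ZD, if_pos hh]
      have h1 : 1 ≤ Dn pv h.headI.1 := by omega
      exact_mod_cast Nat.one_le_cast.mpr h1
    · rw [hR]
      exact pexp_run_le hn hn2 hm hIcc hwin x₀ t
  calc 1 - (1 - ((9 : ℝ≥0∞) * (n : ℝ≥0∞) ^ 3)⁻¹) ^ t * (n : ℝ≥0∞) ^ 2
      ≤ 1 - R.toOuterMeasure {h : List (Cfg n) | h ≠ [] ∧ Dn pv h.headI.1 ≤ m}ᶜ :=
        tsub_le_tsub_left hcompl 1
    _ ≤ R.toOuterMeasure {h : List (Cfg n) | h ≠ [] ∧ Dn pv h.headI.1 ≤ m} :=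
        pmf_one_sub_compl_le R _

end Prob

section Numeric

lemma num_log_pos {n : ℕ} (hn2 : 2 ≤ n) : 0 < Real.log n :=
  Real.log_pos (by exact_mod_cast hn2)

lemma num_log_ge {n : ℕ} (hn2 : 2 ≤ n) : Real.log 2 ≤ Real.log n := by
  have : (2 : ℝ) ≤ n := by exact_mod_cast hn2
  exact Real.log_le_log (by norm_num) this

lemma num_m_pos {k : ℝ} (hk : 0 < k) {n : ℕ} (hn2 : 2 ≤ n) :
    1 ≤ ⌈(k + 3) * Real.log n⌉₊ :=
  Nat.ceil_pos.mpr (mul_pos (by linarith) (num_log_pos hn2))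

lemma num_m_le_n {k : ℝ} (hk : 0 < k) {n : ℕ} (hn0 : ((2 * ⌈k⌉₊ + 9) ^ 2 : ℕ) ≤ n) :
    (⌈(k + 3) * Real.log n⌉₊ : ℕ) ≤ n := by
  have hn2 : 2 ≤ n := le_trans (by nlinarith [Nat.zero_le ⌈k⌉₊]) hn0
  have hn0R : (0 : ℝ) < n := by positivity
  have hs0 : (0 : ℝ) < Real.sqrt n := Real.sqrt_pos.mpr hn0R
  have hlog2 : Real.log n ≤ 2 * (Real.sqrt n - 1) := by
    have h1 : Real.log (Real.sqrt n) ≤ Real.sqrt n - 1 :=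
      Real.log_le_sub_one_of_pos hs0
    have h2 : Real.log (Real.sqrt n) = Real.log n / 2 :=
      Real.log_sqrt (le_of_lt hn0R)
    linarith [h1, h2.symm.le, h2.le]
  have hsqrtk : 2 * k + 9 ≤ Real.sqrt n := by
    have h1 : ((2 * ⌈k⌉₊ + 9 : ℕ) : ℝ) ^ 2 ≤ (n : ℝ) := by
      have := hn0
      push_cast at this ⊢
      exact_mod_cast Nat.cast_le.mpr hn0 |>.trans_eq (by push_cast; ring) |>.trans_eq rfl
    have h2 : ((2 * ⌈k⌉₊ + 9 : ℕ) : ℝ) ≤ Real.sqrt n := by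
      rw [show (n : ℝ) = Real.sqrt n * Real.sqrt n from (Real.mul_self_sqrt (le_of_lt hn0R)).symm] at h1
      nlinarith [Real.sqrt_nonneg (n : ℝ), Nat.cast_nonneg (α := ℝ) (2 * ⌈k⌉₊ + 9)]
    refine le_trans ?_ h2
    push_cast
    have := Nat.le_ceil k
    linarith
  have hceil : (⌈(k + 3) * Real.log n⌉₊ : ℝ) < (k + 3) * Real.log n + 1 :=
    Nat.ceil_lt_add_one (by positivity)
  have hfin : (k + 3) * Real.log n + 1 ≤ (n : ℝ) := by
    have hnn : (n : ℝ) = Real.sqrt n * Real.sqrt n := (Real.mul_self_sqrt (le_of_lt hn0R)).symm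
    have hs1 : (1 : ℝ) ≤ Real.sqrt n := by nlinarith
    calc (k + 3) * Real.log n + 1 ≤ (k + 3) * (2 * (Real.sqrt n - 1)) + 1 := by
          have : (0 : ℝ) < k + 3 := by linarith
          nlinarith [num_log_pos hn2]
      _ ≤ (2 * k + 9) * Real.sqrt n := by nlinarith
      _ ≤ Real.sqrt n * Real.sqrt n := by nlinarith
      _ = (n : ℝ) := hnn.symm
  have : (⌈(k + 3) * Real.log n⌉₊ : ℝ) ≤ (n : ℝ) := by linarith
  exact_mod_cast this

lemma num_window_total {k : ℝ} (hk : 0 < k) {n : ℕ} (hn2 : 2 ≤ n) :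
    (n : ℝ≥0∞) * ENNReal.ofReal (Real.exp (-(⌈(k + 3) * Real.log n⌉₊ : ℝ)))
      ≤ ENNReal.ofReal ((n : ℝ) ^ (-(k + 2))) := by
  have hn0 : (0 : ℝ) < n := by positivity
  rw [← ENNReal.ofReal_natCast n, ← ENNReal.ofReal_mul (by positivity)]
  refine ENNReal.ofReal_le_ofReal ?_
  have h1 : Real.exp (-(⌈(k + 3) * Real.log n⌉₊ : ℝ)) ≤ Real.exp (-((k + 3) * Real.log n)) := by
    rw [Real.exp_le_exp]
    have := Nat.le_ceil ((k + 3) * Real.log n)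
    linarith
  have h2 : Real.exp (-((k + 3) * Real.log n)) = (n : ℝ) ^ (-(k + 3)) := by
    rw [Real.rpow_def_of_pos hn0]
    congr 1
    ring
  have h3 : (n : ℝ) * (n : ℝ) ^ (-(k + 3)) = (n : ℝ) ^ (-(k + 2)) := by
    have := Real.rpow_add hn0 1 (-(k + 3))
    rw [Real.rpow_one] at this
    rw [← this]
    congr 1
    ring
  calc (n : ℝ) * Real.exp (-(⌈(k + 3) * Real.log n⌉₊ : ℝ))
      ≤ (n : ℝ) * (n : ℝ) ^ (-(k + 3)) := by
        rw [← h2]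
        exact mul_le_mul_of_nonneg_left h1 (le_of_lt hn0)
    _ = (n : ℝ) ^ (-(k + 2)) := h3

lemma num_run_bound {k : ℝ} (hk : 0 < k) {n : ℕ} (hn2 : 2 ≤ n) :
    (1 - ((9 : ℝ≥0∞) * (n : ℝ≥0∞) ^ 3)⁻¹)
        ^ ⌈(30 * (k + 4)) * (n : ℝ) ^ ((7 : ℝ) / 2) * Real.log n ^ 2⌉₊ * (n : ℝ≥0∞) ^ 2
      ≤ ENNReal.ofReal ((n : ℝ) ^ (-(k + 2))) := by
  have hn0 : (0 : ℝ) < n := by positivity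
  set T : ℕ := ⌈(30 * (k + 4)) * (n : ℝ) ^ ((7 : ℝ) / 2) * Real.log n ^ 2⌉₊ with hT
  set εr : ℝ := (9 * (n : ℝ) ^ 3)⁻¹ with hεr
  have hεr0 : 0 < εr := by rw [hεr]; positivity
  have hεr1 : εr ≤ 1 := by
    rw [hεr]
    rw [inv_le_one_iff₀]
    right
    have h1n : (1 : ℝ) ≤ (n : ℝ) := by exact_mod_cast Nat.one_le_cast.mpr (by omega)
    nlinarith [sq_nonneg ((n : ℝ) - 1), sq_nonneg ((n : ℝ) + 1)]
  have h1 : (1 - ((9 : ℝ≥0∞) * (n : ℝ≥0∞) ^ 3)⁻¹) = ENNReal.ofReal (1 - εr) := by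
    have e1 : ((9 : ℝ≥0∞) * (n : ℝ≥0∞) ^ 3) = ENNReal.ofReal (9 * (n : ℝ) ^ 3) := by
      rw [ENNReal.ofReal_mul (by norm_num), ENNReal.ofReal_pow (by positivity),
        ENNReal.ofReal_natCast]
      norm_num
    rw [e1, ← ENNReal.ofReal_inv_of_pos (by positivity), ← hεr,
      ENNReal.ofReal_sub _ (le_of_lt hεr0), ENNReal.ofReal_one]
  have h2 : (1 - εr) ≤ Real.exp (-εr) := by
    have := Real.add_one_le_exp (-εr)
    linarith
  have h3 : (1 - ((9 : ℝ≥0∞) * (n : ℝ≥0∞) ^ 3)⁻¹) ^ T ≤ ENNReal.ofReal (Real.exp (-εr * T)) := by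
    rw [h1]
    calc ENNReal.ofReal (1 - εr) ^ T ≤ ENNReal.ofReal (Real.exp (-εr)) ^ T :=
          pow_le_pow_left' (ENNReal.ofReal_le_ofReal h2) T
      _ = ENNReal.ofReal (Real.exp (-εr) ^ T) :=
          (ENNReal.ofReal_pow (le_of_lt (Real.exp_pos _)) T).symm
      _ = ENNReal.ofReal (Real.exp (-εr * T)) := by
          rw [← Real.exp_nat_mul]
          congr 1
          ring
  calc (1 - ((9 : ℝ≥0∞) * (n : ℝ≥0∞) ^ 3)⁻¹) ^ T * (n : ℝ≥0∞) ^ 2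
      ≤ ENNReal.ofReal (Real.exp (-εr * T)) * ENNReal.ofReal ((n : ℝ) ^ 2) := by
        refine mul_le_mul' h3 ?_
        rw [ENNReal.ofReal_pow (by positivity), ENNReal.ofReal_natCast]
    _ = ENNReal.ofReal (Real.exp (-εr * T) * (n : ℝ) ^ 2) :=
        (ENNReal.ofReal_mul (le_of_lt (Real.exp_pos _))).symm
    _ ≤ ENNReal.ofReal ((n : ℝ) ^ (-(k + 2))) := by
        refine ENNReal.ofReal_le_ofReal ?_
        have hL : Real.log 2 ≤ Real.log n := num_log_ge hn2
        have hL2 : (0.6931471803 : ℝ) < Real.log 2 := Real.log_two_gt_d9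
        have hL0 : 0 < Real.log n := num_log_pos hn2
        -- key: (k+4) * log n ≤ εr * T
        have hkey : (k + 4) * Real.log n ≤ εr * T := by
          have hTge : (30 * (k + 4)) * (n : ℝ) ^ ((7 : ℝ) / 2) * Real.log n ^ 2 ≤ (T : ℝ) :=
            Nat.le_ceil _
          have hrw : (n : ℝ) ^ ((7 : ℝ) / 2) = (n : ℝ) ^ (3 : ℕ) * (n : ℝ) ^ ((1 : ℝ) / 2) := by
            rw [← Real.rpow_natCast (n : ℝ) 3, ← Real.rpow_add hn0]
            norm_num
          have hhalf : (1 : ℝ) ≤ (n : ℝ) ^ ((1 : ℝ) / 2) := by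
            refine Real.one_le_rpow ?_ (by norm_num)
            exact_mod_cast Nat.one_le_cast.mpr (by omega)
          have hεrT : εr * ((30 * (k + 4)) * (n : ℝ) ^ ((7 : ℝ) / 2) * Real.log n ^ 2)
              = (30 * (k + 4)) / 9 * (n : ℝ) ^ ((1 : ℝ) / 2) * Real.log n ^ 2 := by
            rw [hεr, hrw]
            have hne : (9 * (n : ℝ) ^ (3 : ℕ)) ≠ 0 := by positivity
            field_simp
          have hthis : (k + 4) * Real.log n
              ≤ (30 * (k + 4)) / 9 * (n : ℝ) ^ ((1 : ℝ) / 2) * Real.log n ^ 2 := by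
            have hkp : (0 : ℝ) < k + 4 := by linarith
            have h9 : (0 : ℝ) < 30 * (k + 4) / 9 := by positivity
            have hc : (1 : ℝ) ≤ 30 / 9 * Real.log 2 := by nlinarith
            have hA : (k + 4) * Real.log n ≤ (30 * (k + 4) / 9) * (Real.log 2 * Real.log n) := by
              have e : (30 * (k + 4) / 9) * (Real.log 2 * Real.log n)
                  = ((30 / 9 * Real.log 2) * (k + 4)) * Real.log n := by ring
              rw [e]
              refine mul_le_mul_of_nonneg_right ?_ (le_of_lt hL0)
              nlinarith [mul_le_mul_of_nonneg_left hc (le_of_lt hkp)]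
            have hB1 : Real.log 2 ≤ (n : ℝ) ^ ((1 : ℝ) / 2) * Real.log n := by
              nlinarith [mul_nonneg (sub_nonneg.mpr hhalf) (le_of_lt hL0)]
            have hB : Real.log 2 * Real.log n
                ≤ (n : ℝ) ^ ((1 : ℝ) / 2) * Real.log n ^ 2 := by
              nlinarith [mul_le_mul_of_nonneg_right hB1 (le_of_lt hL0)]
            calc (k + 4) * Real.log n ≤ (30 * (k + 4) / 9) * (Real.log 2 * Real.log n) := hA
              _ ≤ (30 * (k + 4) / 9) * ((n : ℝ) ^ ((1 : ℝ) / 2) * Real.log n ^ 2) :=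
                  mul_le_mul_of_nonneg_left hB (le_of_lt h9)
              _ = 30 * (k + 4) / 9 * (n : ℝ) ^ ((1 : ℝ) / 2) * Real.log n ^ 2 := by ring
          calc (k + 4) * Real.log n
              ≤ (30 * (k + 4)) / 9 * (n : ℝ) ^ ((1 : ℝ) / 2) * Real.log n ^ 2 := hthis
            _ = εr * ((30 * (k + 4)) * (n : ℝ) ^ ((7 : ℝ) / 2) * Real.log n ^ 2) := hεrT.symm
            _ ≤ εr * T := by
                exact mul_le_mul_of_nonneg_left hTge (le_of_lt hεr0)
        have hexp : Real.exp (-εr * T) ≤ (n : ℝ) ^ (-(k + 4)) := by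
          rw [show ((n : ℝ) ^ (-(k + 4)) : ℝ) = Real.exp (-((k + 4) * Real.log n)) by
            rw [Real.rpow_def_of_pos hn0]; congr 1; ring]
          rw [Real.exp_le_exp]
          linarith
        have hpow : (n : ℝ) ^ (-(k + 4)) * (n : ℝ) ^ 2 = (n : ℝ) ^ (-(k + 2)) := by
          rw [show ((n : ℝ) ^ 2 : ℝ) = (n : ℝ) ^ ((2 : ℕ) : ℝ) by rw [Real.rpow_natCast]]
          rw [← Real.rpow_add hn0]
          congr 1
          ring
        calc Real.exp (-εr * T) * (n : ℝ) ^ 2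
            ≤ (n : ℝ) ^ (-(k + 4)) * (n : ℝ) ^ 2 := by
              refine mul_le_mul_of_nonneg_right hexp (by positivity)
          _ = (n : ℝ) ^ (-(k + 2)) := hpow

lemma num_two_b {k : ℝ} (hk : 0 < k) {n : ℕ} (hn2 : 2 ≤ n) :
    ENNReal.ofReal ((n : ℝ) ^ (-(k + 2))) + ENNReal.ofReal ((n : ℝ) ^ (-(k + 2)))
      ≤ ENNReal.ofReal ((n : ℝ) ^ (-k)) := by
  have hn0 : (0 : ℝ) < n := by positivity
  rw [← ENNReal.ofReal_add (by positivity) (by positivity)]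
  refine ENNReal.ofReal_le_ofReal ?_
  have h1 : (n : ℝ) ^ (-(k + 2)) * (n : ℝ) ^ (2 : ℝ) = (n : ℝ) ^ (-k) := by
    rw [← Real.rpow_add hn0]
    congr 1
    ring
  have h2 : (2 : ℝ) ≤ (n : ℝ) ^ (2 : ℝ) := by
    have e : (n : ℝ) ^ (2 : ℝ) = (n : ℝ) ^ (2 : ℕ) := by
      rw [← Real.rpow_natCast (n : ℝ) 2]; norm_num
    rw [e]
    have : (2 : ℝ) ≤ n := by exact_mod_cast hn2
    nlinarith
  have h3 : (0 : ℝ) < (n : ℝ) ^ (-(k + 2)) := Real.rpow_pos_of_pos hn0 _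
  nlinarith

lemma num_m_le_goal {k : ℝ} (hk : 0 < k) {n : ℕ} (hn2 : 2 ≤ n) :
    (⌈(k + 3) * Real.log n⌉₊ : ℝ) ≤ (k + 5) * Real.log n := by
  have hceil : (⌈(k + 3) * Real.log n⌉₊ : ℝ) < (k + 3) * Real.log n + 1 :=
    Nat.ceil_lt_add_one (mul_nonneg (by linarith) (le_of_lt (num_log_pos hn2)))
  have hL : Real.log 2 ≤ Real.log n := num_log_ge hn2
  have hL2 : (0.6931471803 : ℝ) < Real.log 2 := Real.log_two_gt_d9
  nlinarith

lemma headI_mem {β : Type*} [Inhabited β] {l : List β} (h : l ≠ []) : l.headI ∈ l := by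
  cases l with
  | nil => exact absurd rfl h
  | cons a t => simp

lemma ennreal_one_sub_sq (b : ℝ≥0∞) : 1 - 2 * b ≤ (1 - b) * (1 - b) := by
  have h1 : (1 - b) * (1 - b) = 1 * (1 - b) - b * (1 - b) :=
    ENNReal.sub_mul (fun _ _ => ne_top_of_le_ne_top ENNReal.one_ne_top tsub_le_self)
  rw [h1, one_mul]
  have h2 : b * (1 - b) ≤ b := by
    calc b * (1 - b) ≤ b * 1 := mul_le_mul' le_rfl tsub_le_self
      _ = b := mul_one b
  calc 1 - 2 * b = 1 - b - b := by rw [tsub_tsub, two_mul]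
    _ ≤ (1 - b) - b * (1 - b) := tsub_le_tsub_left h2 _
end Numeric

end Aux


/-- Suppose the `n` processing times are drawn independently and
uniformly at random from `{1, …, n}` (joint distribution `μ`) and thereafter remain
fixed, and the initial solution is drawn uniformly at random from `{0,1}^n`.  Then
with probability at least `1 - n^{-k}` (over the processing times, the initial
solution, and the run) the (1+1) EA obtains a solution of discrepancy at most
`c' · log n` within `C · n^{3.5} · log² n` iterations. -/
theorem ea_uniform_times_logn_discrepancy :
    ∀ k : ℝ, 0 < k →
      ∃ c' C : ℝ, 0 < c' ∧ 0 < C ∧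
        ∀ (n : ℕ) (hn : 0 < n) (μ : PMF (Fin n → ℕ)),
          (∀ f, μ f = if ∀ j, f j ∈ Finset.Icc 1 n then ((n : ℝ≥0∞))⁻¹ ^ n else 0) →
          ENNReal.ofReal (1 - (n : ℝ) ^ (-k)) ≤
            (μ.bind fun pv =>
                (PMF.uniformOfFintype (Fin n → Bool)).bind fun x₀ =>
                  (run (eaStep hn) (fun _ i => (pv i : ℝ)) (x₀, fun i => (pv i : ℝ))
                      ⌈C * (n : ℝ) ^ ((7 : ℝ) / 2) * Real.log n ^ 2⌉₊).map
                    fun h => (pv, h)).toOuterMeasure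
              {ph : (Fin n → ℕ) × List (Cfg n) |
                ∃ c ∈ ph.2, disc (fun i => (ph.1 i : ℝ)) c.1 ≤ c' * Real.log n} := by
  intro k hk
  classical
  set n0 : ℕ := (2 * ⌈k⌉₊ + 9) ^ 2 with hn0def
  refine ⟨max (k + 5) ((n0 : ℝ) ^ 2 / Real.log 2), 30 * (k + 4),
    lt_of_lt_of_le (by linarith) (le_max_left _ _), by linarith, ?_⟩
  intro n hn μ hμ
  set c' : ℝ := max (k + 5) ((n0 : ℝ) ^ 2 / Real.log 2) with hc'
  by_cases hn2' : n < 2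
  · have hne : n = 1 := by omega
    subst hne
    have h0 : ENNReal.ofReal (1 - ((1 : ℕ) : ℝ) ^ (-k)) = 0 := by
      norm_num [Real.one_rpow]
    exact le_trans (le_of_eq h0) zero_le
  push_neg at hn2'
  set T : ℕ := ⌈30 * (k + 4) * (n : ℝ) ^ ((7 : ℝ) / 2) * Real.log n ^ 2⌉₊ with hT
  have hvalid : ∀ pv : Fin n → ℕ, μ pv ≠ 0 → ∀ j, 1 ≤ pv j ∧ pv j ≤ n := by
    intro pv hne
    by_cases hall : ∀ j, pv j ∈ Finset.Icc 1 n
    · exact fun j => Finset.mem_Icc.mp (hall j)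
    · exact absurd (by rw [hμ pv, if_neg hall]) hne
  rw [PMF.toOuterMeasure_bind_apply]
  have hinner : ∀ pv : Fin n → ℕ,
      (((PMF.uniformOfFintype (Fin n → Bool)).bind fun x₀ =>
        ((run (eaStep hn) (fun _ i => (pv i : ℝ)) (x₀, fun i => (pv i : ℝ)) T).map
          fun h => (pv, h))).toOuterMeasure {ph : (Fin n → ℕ) × List (Cfg n) |
            ∃ c ∈ ph.2, disc (fun i => (ph.1 i : ℝ)) c.1 ≤ c' * Real.log n})
      = ∑' x₀, (PMF.uniformOfFintype (Fin n → Bool)) x₀ *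
          (run (eaStep hn) (fun _ i => (pv i : ℝ)) (x₀, fun i => (pv i : ℝ)) T).toOuterMeasure
            {h : List (Cfg n) | ∃ c ∈ h, disc (fun i => (pv i : ℝ)) c.1 ≤ c' * Real.log n} := by
    intro pv
    rw [PMF.toOuterMeasure_bind_apply]
    refine tsum_congr fun x₀ => ?_
    rw [PMF.toOuterMeasure_map_apply]
    rfl
  by_cases hbig : n0 ≤ n
  · -- large n : the drift argument
    set m : ℕ := ⌈(k + 3) * Real.log n⌉₊ with hm
    have hm1 : 1 ≤ m := num_m_pos hk hn2'
    have hmn : m ≤ n := num_m_le_n hk (by rw [← hn0def]; exact hbig)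
    set b : ℝ≥0∞ := ENNReal.ofReal ((n : ℝ) ^ (-(k + 2))) with hb
    have hrun : ∀ pv : Fin n → ℕ, (∀ j, 1 ≤ pv j ∧ pv j ≤ n) → WinGood n m pv →
        ∀ x₀ : Fin n → Bool, 1 - b ≤
          (run (eaStep hn) (fun _ i => (pv i : ℝ)) (x₀, fun i => (pv i : ℝ)) T).toOuterMeasure
            {h : List (Cfg n) | ∃ c ∈ h, disc (fun i => (pv i : ℝ)) c.1 ≤ c' * Real.log n} := by
      intro pv hIcc hwin x₀
      have hsub : {h : List (Cfg n) | h ≠ [] ∧ Dn pv h.headI.1 ≤ m}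
          ⊆ {h : List (Cfg n) | ∃ c ∈ h, disc (fun i => (pv i : ℝ)) c.1 ≤ c' * Real.log n} := by
        intro h hh
        obtain ⟨hnil, hD⟩ := hh
        refine ⟨h.headI, headI_mem hnil, ?_⟩
        rw [disc_eq_Dn]
        calc (Dn pv h.headI.1 : ℝ) ≤ (m : ℝ) := by exact_mod_cast hD
          _ ≤ (k + 5) * Real.log n := by rw [hm]; exact num_m_le_goal hk hn2'
          _ ≤ c' * Real.log n :=
              mul_le_mul_of_nonneg_right (le_max_left _ _) (le_of_lt (num_log_pos hn2'))
      refine le_trans (le_trans ?_ (run_good_prob hn hn2' hm1 hIcc hwin x₀ T))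
        (MeasureTheory.measure_mono hsub)
      refine tsub_le_tsub_left ?_ 1
      rw [hb, hT]
      exact num_run_bound hk hn2'
    have hwgood : 1 - b ≤ μ.toOuterMeasure {pv : Fin n → ℕ | WinGood n m pv} := by
      have hcompl : {pv : Fin n → ℕ | WinGood n m pv}ᶜ
          = {pv : Fin n → ℕ | ¬ WinGood n m pv} := by
        ext pv; simp
      refine le_trans ?_ (pmf_one_sub_compl_le μ _)
      rw [hcompl]
      refine tsub_le_tsub_left ?_ 1
      refine le_trans (mu_not_winGood_le hn hμ hm1 hmn) ?_
      rw [hb, hm]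
      exact num_window_total hk hn2'
    have hfinal : (1 - b) * μ.toOuterMeasure {pv : Fin n → ℕ | WinGood n m pv}
        ≤ ∑' pv, μ pv *
          (((PMF.uniformOfFintype (Fin n → Bool)).bind fun x₀ =>
            ((run (eaStep hn) (fun _ i => (pv i : ℝ)) (x₀, fun i => (pv i : ℝ)) T).map
              fun h => (pv, h))).toOuterMeasure {ph : (Fin n → ℕ) × List (Cfg n) |
                ∃ c ∈ ph.2, disc (fun i => (ph.1 i : ℝ)) c.1 ≤ c' * Real.log n}) := by
      rw [PMF.toOuterMeasure_apply, ← ENNReal.tsum_mul_left]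
      refine ENNReal.tsum_le_tsum fun pv => ?_
      rw [hinner pv]
      by_cases hmem : pv ∈ {pv : Fin n → ℕ | WinGood n m pv}
      · rw [Set.indicator_of_mem hmem]
        by_cases hz : μ pv = 0
        · rw [hz]; simp
        · rw [mul_comm ((1 : ℝ≥0∞) - b) (μ pv)]
          refine mul_le_mul' le_rfl ?_
          calc (1 : ℝ≥0∞) - b
              = ∑' x₀ : Fin n → Bool, (PMF.uniformOfFintype (Fin n → Bool)) x₀ * (1 - b) := by
                rw [ENNReal.tsum_mul_right, PMF.tsum_coe, one_mul]
            _ ≤ _ := ENNReal.tsum_le_tsum fun x₀ =>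
                mul_le_mul' le_rfl (hrun pv (hvalid pv hz) hmem x₀)
      · rw [Set.indicator_of_notMem hmem]
        simp
    refine le_trans ?_ (le_trans (mul_le_mul' le_rfl hwgood) hfinal)
    refine le_trans ?_ (ennreal_one_sub_sq b)
    have heq : ENNReal.ofReal (1 - (n : ℝ) ^ (-k)) = 1 - ENNReal.ofReal ((n : ℝ) ^ (-k)) := by
      rw [ENNReal.ofReal_sub _ (by positivity), ENNReal.ofReal_one]
    rw [heq]
    refine tsub_le_tsub_left ?_ 1
    rw [two_mul, hb]
    exact num_two_b hk hn2'
  · -- small n : the event is certain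
    push_neg at hbig
    have hsmall : ∀ pv : Fin n → ℕ, (∀ j, 1 ≤ pv j ∧ pv j ≤ n) →
        ∀ x₀ : Fin n → Bool, (1 : ℝ≥0∞) ≤
          (run (eaStep hn) (fun _ i => (pv i : ℝ)) (x₀, fun i => (pv i : ℝ)) T).toOuterMeasure
            {h : List (Cfg n) | ∃ c ∈ h, disc (fun i => (pv i : ℝ)) c.1 ≤ c' * Real.log n} := by
      intro pv hIcc x₀
      have hsub : {h : List (Cfg n) | h ≠ []}
          ⊆ {h : List (Cfg n) | ∃ c ∈ h, disc (fun i => (pv i : ℝ)) c.1 ≤ c' * Real.log n} := by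
        intro h hnil
        refine ⟨h.headI, headI_mem hnil, ?_⟩
        rw [disc_eq_Dn]
        have h2 := Dn_le_nsq pv hIcc h.headI.1
        have hd1 : (Dn pv h.headI.1 : ℝ) ≤ (n : ℝ) * n := by
          calc (Dn pv h.headI.1 : ℝ) ≤ ((n ^ 2 : ℕ) : ℝ) := Nat.cast_le.mpr h2
            _ = (n : ℝ) * n := by push_cast; ring
        have hlog2 : (0 : ℝ) < Real.log 2 := Real.log_pos (by norm_num)
        have hc'2 : ((n0 : ℝ) ^ 2 / Real.log 2) ≤ c' := le_max_right _ _
        have hn0' : (n : ℝ) ≤ (n0 : ℝ) := by exact_mod_cast le_of_lt hbig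
        have hfin : (n : ℝ) * n ≤ c' * Real.log n := by
          have h3 : (n : ℝ) * n ≤ (n0 : ℝ) ^ 2 := by
            nlinarith [Nat.cast_nonneg (α := ℝ) n]
          have h4 : (n0 : ℝ) ^ 2 = (n0 : ℝ) ^ 2 / Real.log 2 * Real.log 2 := by
            field_simp
          calc (n : ℝ) * n ≤ (n0 : ℝ) ^ 2 := h3
            _ = (n0 : ℝ) ^ 2 / Real.log 2 * Real.log 2 := h4
            _ ≤ c' * Real.log n := by
                refine mul_le_mul hc'2 (num_log_ge hn2') (le_of_lt hlog2) ?_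
                exact le_trans (div_nonneg (by positivity) (le_of_lt hlog2)) hc'2
        linarith
      refine le_trans ?_ (MeasureTheory.measure_mono hsub)
      have hc0 : (run (eaStep hn) (fun _ i => (pv i : ℝ)) (x₀, fun i => (pv i : ℝ)) T).toOuterMeasure
          {h : List (Cfg n) | h ≠ []}ᶜ = 0 := by
        rw [PMF.toOuterMeasure_apply_eq_zero_iff]
        refine Set.disjoint_left.mpr ?_
        intro h hsup hmem
        exact hmem (run_support_ne_nil T h hsup)
      have := pmf_one_sub_compl_le
        (run (eaStep hn) (fun _ i => (pv i : ℝ)) (x₀, fun i => (pv i : ℝ)) T)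
        {h : List (Cfg n) | h ≠ []}
      rw [hc0, tsub_zero] at this
      exact this
    have hfinal : (1 : ℝ≥0∞) ≤ ∑' pv, μ pv *
        (((PMF.uniformOfFintype (Fin n → Bool)).bind fun x₀ =>
          ((run (eaStep hn) (fun _ i => (pv i : ℝ)) (x₀, fun i => (pv i : ℝ)) T).map
            fun h => (pv, h))).toOuterMeasure {ph : (Fin n → ℕ) × List (Cfg n) |
              ∃ c ∈ ph.2, disc (fun i => (ph.1 i : ℝ)) c.1 ≤ c' * Real.log n}) := by
      rw [show (1 : ℝ≥0∞) = ∑' pv, μ pv from (PMF.tsum_coe μ).symm]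
      refine ENNReal.tsum_le_tsum fun pv => ?_
      by_cases hz : μ pv = 0
      · rw [hz]; simp
      · rw [hinner pv]
        calc μ pv = μ pv * 1 := (mul_one _).symm
          _ ≤ μ pv * ∑' x₀ : Fin n → Bool, (PMF.uniformOfFintype (Fin n → Bool)) x₀ *
              (run (eaStep hn) (fun _ i => (pv i : ℝ)) (x₀, fun i => (pv i : ℝ)) T).toOuterMeasure
                {h : List (Cfg n) | ∃ c ∈ h, disc (fun i => (pv i : ℝ)) c.1 ≤ c' * Real.log n} := by
            refine mul_le_mul' le_rfl ?_
            calc (1 : ℝ≥0∞)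
                = ∑' x₀ : Fin n → Bool, (PMF.uniformOfFintype (Fin n → Bool)) x₀ * 1 := by
                  rw [ENNReal.tsum_mul_right, PMF.tsum_coe, one_mul]
              _ ≤ _ := ENNReal.tsum_le_tsum fun x₀ =>
                  mul_le_mul' le_rfl (hsmall pv (hvalid pv hz) x₀)
    refine le_trans ?_ hfinal
    refine ENNReal.ofReal_le_one.mpr ?_
    have hr : (0 : ℝ) ≤ (n : ℝ) ^ (-k) := by positivity
    linarith

end MakespanDyn
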